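/- The intersection of the real subspaces V₁⁻ and Ṽ₁⁰ of su(2)³ is trivial: V₁⁻ ⊓ Ṽ₁⁰ = {0}. (This is the paper's observation in Section 4 that the case j = 1 is special because V₁⁻ ∩ Ṽ₁⁰ = {0}.) -/
import Mathlib


/-!
The real subspaces `V₁⁻` and `Ṽ₁⁰` of `su(2)³` intersect trivially
(the paper's observation that the case `j = 1` is special).
-/

open Complex Matrix

/-- `𝔱₁ = -(i/2)σ₁`. -/
noncomputable def t1 : Matrix (Fin 2) (Fin 2) ℂ := -(I / 2) • !![0, 1; 1, 0]
/-- `𝔱₂ = -(i/2)σ₂`. -/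
noncomputable def t2 : Matrix (Fin 2) (Fin 2) ℂ := -(I / 2) • !![0, -I; I, 0]
/-- `𝔱₃ = -(i/2)σ₃`. -/
noncomputable def t3 : Matrix (Fin 2) (Fin 2) ℂ := -(I / 2) • !![1, 0; 0, -1]

/-- `V₁⁻ = ℝ-span{(𝔱₁,𝔱₂,𝔱₃)} ⊆ su(2)³`. -/
noncomputable def V1m : Submodule ℝ (Fin 3 → Matrix (Fin 2) (Fin 2) ℂ) :=
  Submodule.span ℝ {![t1, t2, t3]}

/-- `Ṽ₁⁰ = ℝ-span{(𝔱₁,0,-𝔱₂), (0,𝔱₁,-𝔱₃), (-𝔱₃,𝔱₂,0)} ⊆ su(2)³`. -/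
noncomputable def V1t0 : Submodule ℝ (Fin 3 → Matrix (Fin 2) (Fin 2) ℂ) :=
  Submodule.span ℝ {![t1, 0, -t2], ![0, t1, -t3], ![-t3, t2, 0]}

theorem statement9 : V1m ⊓ V1t0 = ⊥ := by
  rw [eq_bot_iff]
  intro x hx
  rw [Submodule.mem_inf] at hx
  obtain ⟨hx1, hx2⟩ := hx
  rw [V1m, Submodule.mem_span_singleton] at hx1
  obtain ⟨a, ha⟩ := hx1
  rw [V1t0, show ({![t1, 0, -t2], ![0, t1, -t3], ![-t3, t2, 0]} :
      Set (Fin 3 → Matrix (Fin 2) (Fin 2) ℂ)) =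
      insert ![t1, 0, -t2] (insert ![0, t1, -t3] {![-t3, t2, 0]}) from rfl,
    Submodule.mem_span_insert] at hx2
  obtain ⟨b, y, hy, hxy⟩ := hx2
  rw [Submodule.mem_span_insert] at hy
  obtain ⟨c, z, hz, hyz⟩ := hy
  rw [Submodule.mem_span_singleton] at hz
  obtain ⟨d, hd⟩ := hz
  subst hd hyz hxy
  have h := ha
  -- extract scalar equations
  have e00 : (a • ![t1, t2, t3]) 0 0 0 =
      (b • ![t1, 0, -t2] + (c • ![0, t1, -t3] + d • ![-t3, t2, 0])) 0 0 0 := by rw [h]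
  have e01 : (a • ![t1, t2, t3]) 0 0 1 =
      (b • ![t1, 0, -t2] + (c • ![0, t1, -t3] + d • ![-t3, t2, 0])) 0 0 1 := by rw [h]
  have e11 : (a • ![t1, t2, t3]) 1 0 1 =
      (b • ![t1, 0, -t2] + (c • ![0, t1, -t3] + d • ![-t3, t2, 0])) 1 0 1 := by rw [h]
  simp [t1, t2, t3, Matrix.smul_apply, Matrix.add_apply, Complex.ext_iff,
    Complex.real_smul] at e00 e01 e11
  rw [← ha, e11.1, e00, zero_smul]
  exact Submodule.zero_mem ⊥
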